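/- Let V be a 5-dimensional complex representation of S_3 × C_3 such that every non-identity element of S_3 × {1} and of {1} × C_3 acts with trace −1. Then as an S_3 × C_3 representation, V ≅ (sgn ⊠ triv) ⊕ (std ⊠ χ) ⊕ (std ⊠ χ²), where sgn is the sign representation of S_3, std is the 2-dimensional irreducible representation of S_3, triv is the trivial character of C_3, and χ, χ² are the two nontrivial characters of C_3 (in some order). -/

import Mathlib

open Module

open Module LinearMap Equiv

section core
variable {H : Type*} [Group H] [Fintype H]
variable {V : Type*} [AddCommGroup V] [Module ℂ V] [FiniteDimensional ℂ V]

lemma sum_trace_eq (π : Representation ℂ H V) :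
    ∃ n : ℕ, ∑ x : H, LinearMap.trace ℂ V (π x) = (Fintype.card H : ℂ) * n := by
  have hc : (Fintype.card H : ℂ) ≠ 0 := by
    exact_mod_cast Nat.cast_ne_zero.mpr Fintype.card_ne_zero
  have : Invertible (Fintype.card H : ℂ) := invertibleOfNonzero hc
  refine ⟨finrank ℂ (Representation.invariants π), ?_⟩
  have ht := (Representation.isProj_averageMap π).trace
  have h2 : LinearMap.trace ℂ V (Representation.averageMap π)
      = ⅟ (Fintype.card H : ℂ) • ∑ x : H, LinearMap.trace ℂ V (π x) := by
    simp [Representation.averageMap, GroupAlgebra.average, map_sum,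
      Representation.asAlgebraHom_single]
  rw [h2, invOf_eq_inv _, smul_eq_mul] at ht
  field_simp at ht
  rw [ht]
end core

section hom3
variable {K : Type*} [Group K]

lemma pow_mod3 {g : K} (hg : g ^ 3 = 1) (m : ℕ) : g ^ (m % 3) = g ^ m := by
  conv_rhs => rw [← Nat.div_add_mod m 3]
  rw [pow_add, pow_mul, hg, one_pow, one_mul]

/-- Monoid hom from C3 sending the generator to an element of order dividing 3. -/
def hom3 (g : K) (hg : g ^ 3 = 1) : Multiplicative (ZMod 3) →* K where
  toFun x := g ^ (Multiplicative.toAdd x).val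
  map_one' := by simp
  map_mul' a b := by
    show g ^ (Multiplicative.toAdd a + Multiplicative.toAdd b).val = _
    rw [ZMod.val_add, pow_mod3 hg, pow_add]

@[simp] lemma hom3_apply (g : K) (hg : g ^ 3 = 1) (x : Multiplicative (ZMod 3)) :
    hom3 g hg x = g ^ (Multiplicative.toAdd x).val := rfl
end hom3

section twist
variable {H : Type*} [Group H]
variable {V : Type*} [AddCommGroup V] [Module ℂ V]

/-- Twist a representation by a one-dimensional character. -/
def twist (π : Representation ℂ H V) (lam : H →* ℂˣ) : Representation ℂ H V where
  toFun x := ((((lam x)⁻¹ : ℂˣ) : ℂ)) • π x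
  map_one' := by simp
  map_mul' a b := by
    ext v
    simp only [map_mul, LinearMap.smul_apply, Module.End.mul_apply, map_smul, Units.val_mul,
      mul_inv_rev, mul_smul]

lemma trace_twist [FiniteDimensional ℂ V] (π : Representation ℂ H V) (lam : H →* ℂˣ) (x : H) :
    LinearMap.trace ℂ V (twist π lam x) = (((lam x)⁻¹ : ℂˣ) : ℂ) * LinearMap.trace ℂ V (π x) := by
  show LinearMap.trace ℂ V (((((lam x)⁻¹ : ℂˣ) : ℂ)) • π x) = _
  rw [map_smul, smul_eq_mul]
end twist

lemma perm3_cases : ∀ g : Equiv.Perm (Fin 3),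
    g = 1 ∨ g = Equiv.swap 0 1 ∨ g = Equiv.swap 0 2 ∨ g = Equiv.swap 1 2 ∨
      g = finRotate 3 ∨ g = (finRotate 3)^2 := by decide

lemma zmod3_cases : ∀ x : Multiplicative (ZMod 3),
    x = 1 ∨ x = Multiplicative.ofAdd 1 ∨ x = Multiplicative.ofAdd 2 := by decide

lemma perm3_sum (f : Equiv.Perm (Fin 3) → ℂ) :
    ∑ g, f g = f 1 + f (Equiv.swap 0 1) + f (Equiv.swap 0 2) + f (Equiv.swap 1 2) +
      f (finRotate 3) + f ((finRotate 3)^2) := by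
  have : (Finset.univ : Finset (Equiv.Perm (Fin 3))) =
      {1, Equiv.swap 0 1, Equiv.swap 0 2, Equiv.swap 1 2, finRotate 3, (finRotate 3)^2} := by
    decide
  rw [this, Finset.sum_insert (by decide), Finset.sum_insert (by decide),
    Finset.sum_insert (by decide), Finset.sum_insert (by decide),
    Finset.sum_insert (by decide), Finset.sum_singleton]
  ring

lemma zmod3_sum (f : Multiplicative (ZMod 3) → ℂ) :
    ∑ x, f x = f 1 + f (Multiplicative.ofAdd 1) + f (Multiplicative.ofAdd 2) := by
  have : (Finset.univ : Finset (Multiplicative (ZMod 3))) =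
      {1, Multiplicative.ofAdd 1, Multiplicative.ofAdd 2} := by decide
  rw [this, Finset.sum_insert (by decide), Finset.sum_insert (by decide),
    Finset.sum_singleton]
  ring

/-- The sign character of S₃ with values in ℂˣ. -/
noncomputable def sgnC : Equiv.Perm (Fin 3) →* ℂˣ :=
  (Units.map (Int.castRingHom ℂ).toMonoidHom).comp Equiv.Perm.sign


set_option maxHeartbeats 2000000 in
/-- Character-theoretic form of: a 5-dimensional complex representation V of S₃ × C₃ on
which every non-identity element of S₃ × {1} and of {1} × C₃ acts with trace −1 is
isomorphic to (sgn ⊠ triv) ⊕ (std ⊠ χ) ⊕ (std ⊠ χ²) for the two nontrivial characters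
χ, χ² of C₃ in some order. Since complex representations of a finite group are
determined up to isomorphism by their characters, we express the conclusion as the
equality of the character of V with that of the stated direct sum: for some primitive
cube root of unity ζ (the choice of ζ versus ζ² accounting for "in some order"),
tr ρ(g,h) = sgn(g) + χ_std(g)·(ζ^h + ζ^{2h}), where χ_std(g) = #fix(g) − 1 is the
character of the standard 2-dimensional representation of S₃. -/
theorem stmt13 (V : Type*) [AddCommGroup V] [Module ℂ V] [FiniteDimensional ℂ V]
    (ρ : Representation ℂ (Equiv.Perm (Fin 3) × Multiplicative (ZMod 3)) V)
    (hdim : finrank ℂ V = 5)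
    (hS3 : ∀ g : Equiv.Perm (Fin 3), g ≠ 1 → LinearMap.trace ℂ V (ρ (g, 1)) = -1)
    (hC3 : ∀ h : Multiplicative (ZMod 3), h ≠ 1 → LinearMap.trace ℂ V (ρ (1, h)) = -1) :
    ∃ ζ : ℂ, IsPrimitiveRoot ζ 3 ∧
      ∀ (g : Equiv.Perm (Fin 3)) (h : Multiplicative (ZMod 3)),
        LinearMap.trace ℂ V (ρ (g, h)) =
          ((Equiv.Perm.sign g : ℤ) : ℂ) +
            (((Finset.univ.filter fun i => g i = i).card : ℂ) - 1) *
              (ζ ^ (ZMod.val (Multiplicative.toAdd h)) +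
                ζ ^ (2 * ZMod.val (Multiplicative.toAdd h))) := by
  obtain ⟨ζ, hζ⟩ : ∃ ζ : ℂ, IsPrimitiveRoot ζ 3 := ⟨_, Complex.isPrimitiveRoot_exp 3 (by norm_num)⟩
  have hζ3 : ζ ^ 3 = 1 := hζ.pow_eq_one
  have hζ1 : ζ ≠ 1 := hζ.ne_one (by norm_num)
  have hζ0 : ζ ≠ 0 := hζ.ne_zero (by norm_num)
  have hζq : ζ ^ 2 + ζ + 1 = 0 := by
    rcases mul_eq_zero.mp (show (ζ - 1) * (ζ ^ 2 + ζ + 1) = 0 by linear_combination hζ3)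
      with h | h
    · exact absurd (sub_eq_zero.mp h) hζ1
    · exact h
  refine ⟨ζ, hζ, ?_⟩
  -- the unit version of ζ
  set zu : ℂˣ := ⟨ζ, ζ ^ 2, by linear_combination hζ3, by linear_combination hζ3⟩ with hzu_def
  have hzuval : (zu : ℂ) = ζ := rfl
  have hzu3 : zu ^ 3 = 1 := by
    ext; rw [Units.val_pow_eq_pow_val, hzuval, hζ3]; rfl
  have hzu23 : (zu ^ 2) ^ 3 = 1 := by rw [← pow_mul, mul_comm, pow_mul, hzu3, one_pow]
  -- inverse values
  have hi1 : (ζ : ℂ)⁻¹ = ζ ^ 2 := inv_eq_of_mul_eq_one_right (by linear_combination hζ3)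
  have hi2 : ((ζ : ℂ) ^ 2)⁻¹ = ζ := inv_eq_of_mul_eq_one_right (by linear_combination hζ3)
  have hi4 : (((ζ : ℂ) ^ 2) ^ 2)⁻¹ = ζ ^ 2 :=
    inv_eq_of_mul_eq_one_right (by linear_combination (ζ ^ 3 + 1) * hζ3)
  -- basic character values
  have h11 : LinearMap.trace ℂ V (ρ (1, 1)) = 5 := by
    rw [show ((1, 1) : Equiv.Perm (Fin 3) × Multiplicative (ZMod 3)) = 1 from rfl, map_one,
      trace_one, hdim]
    norm_num
  have hd1 : LinearMap.trace ℂ V (ρ (1, Multiplicative.ofAdd 1)) = -1 := hC3 _ (by decide)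
  have hd2 : LinearMap.trace ℂ V (ρ (1, Multiplicative.ofAdd 2)) = -1 := hC3 _ (by decide)
  have hr1 : LinearMap.trace ℂ V (ρ (finRotate 3, 1)) = -1 := hS3 _ (by decide)
  have hr2 : LinearMap.trace ℂ V (ρ ((finRotate 3) ^ 2, 1)) = -1 := hS3 _ (by decide)
  have ht01 : LinearMap.trace ℂ V (ρ (Equiv.swap 0 1, 1)) = -1 := hS3 _ (by decide)
  have ht02 : LinearMap.trace ℂ V (ρ (Equiv.swap 0 2, 1)) = -1 := hS3 _ (by decide)
  have ht12 : LinearMap.trace ℂ V (ρ (Equiv.swap 1 2, 1)) = -1 := hS3 _ (by decide)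
  -- conjugation invariance of the character
  have hconj : ∀ a b : Equiv.Perm (Fin 3) × Multiplicative (ZMod 3),
      LinearMap.trace ℂ V (ρ (a * b * a⁻¹)) = LinearMap.trace ℂ V (ρ b) := by
    intro a b
    have h1 : ρ (a * b * a⁻¹) = ρ a * ρ b * ρ a⁻¹ := by rw [map_mul, map_mul]
    rw [h1, trace_mul_comm, ← mul_assoc, ← map_mul, inv_mul_cancel, map_one, one_mul]
  have hcσ : ∀ y : Multiplicative (ZMod 3),
      LinearMap.trace ℂ V (ρ ((finRotate 3) ^ 2, y)) =
        LinearMap.trace ℂ V (ρ (finRotate 3, y)) := by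
    intro y
    have h := hconj (Equiv.swap 0 1, 1) (finRotate 3, y)
    simp only [Prod.inv_mk, Prod.mk_mul_mk, one_mul, mul_one, inv_one] at h
    rw [show Equiv.swap (0 : Fin 3) 1 * finRotate 3 * (Equiv.swap (0 : Fin 3) 1)⁻¹ =
        (finRotate 3) ^ 2 from by decide] at h
    exact h
  have hcτ2 : ∀ y : Multiplicative (ZMod 3),
      LinearMap.trace ℂ V (ρ (Equiv.swap 0 2, y)) =
        LinearMap.trace ℂ V (ρ (Equiv.swap 0 1, y)) := by
    intro y
    have h := hconj (Equiv.swap 1 2, 1) (Equiv.swap 0 1, y)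
    simp only [Prod.inv_mk, Prod.mk_mul_mk, one_mul, mul_one, inv_one] at h
    rw [show Equiv.swap (1 : Fin 3) 2 * Equiv.swap 0 1 * (Equiv.swap (1 : Fin 3) 2)⁻¹ =
        Equiv.swap 0 2 from by decide] at h
    exact h
  have hcτ3 : ∀ y : Multiplicative (ZMod 3),
      LinearMap.trace ℂ V (ρ (Equiv.swap 1 2, y)) =
        LinearMap.trace ℂ V (ρ (Equiv.swap 0 1, y)) := by
    intro y
    have h := hconj (Equiv.swap 0 2, 1) (Equiv.swap 0 1, y)
    simp only [Prod.inv_mk, Prod.mk_mul_mk, one_mul, mul_one, inv_one] at h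
    rw [show Equiv.swap (0 : Fin 3) 2 * Equiv.swap 0 1 * (Equiv.swap (0 : Fin 3) 2)⁻¹ =
        Equiv.swap 1 2 from by decide] at h
    exact h
  -- abbreviations for the unknown character values
  -- W1 = tr ρ(σ, h), W2 = tr ρ(σ, h²), U1 = tr ρ(τ, h), U2 = tr ρ(τ, h²)
  have hσ3 : (finRotate 3) ^ 3 = 1 := by decide
  -- the C3 × C3 subgroup constraint
  have key9 : ∀ z w : ℂˣ, z ^ 3 = 1 → w ^ 3 = 1 → ∃ n : ℕ,
      LinearMap.trace ℂ V (ρ (1, 1)) +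
        ((w : ℂ))⁻¹ * LinearMap.trace ℂ V (ρ (1, Multiplicative.ofAdd 1)) +
        (((w : ℂ)) ^ 2)⁻¹ * LinearMap.trace ℂ V (ρ (1, Multiplicative.ofAdd 2)) +
        (((z : ℂ))⁻¹ * LinearMap.trace ℂ V (ρ (finRotate 3, 1)) +
          ((w : ℂ))⁻¹ * ((z : ℂ))⁻¹ *
            LinearMap.trace ℂ V (ρ (finRotate 3, Multiplicative.ofAdd 1)) +
          (((w : ℂ)) ^ 2)⁻¹ * ((z : ℂ))⁻¹ *
            LinearMap.trace ℂ V (ρ (finRotate 3, Multiplicative.ofAdd 2))) +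
        ((((z : ℂ)) ^ 2)⁻¹ * LinearMap.trace ℂ V (ρ ((finRotate 3) ^ 2, 1)) +
          ((w : ℂ))⁻¹ * (((z : ℂ)) ^ 2)⁻¹ *
            LinearMap.trace ℂ V (ρ ((finRotate 3) ^ 2, Multiplicative.ofAdd 1)) +
          (((w : ℂ)) ^ 2)⁻¹ * (((z : ℂ)) ^ 2)⁻¹ *
            LinearMap.trace ℂ V (ρ ((finRotate 3) ^ 2, Multiplicative.ofAdd 2))) = 9 * n := by
    intro z w hz hw
    obtain ⟨n, hn⟩ := sum_trace_eq (twist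
      ((ρ.comp ((hom3 (finRotate 3) hσ3).prodMap (MonoidHom.id (Multiplicative (ZMod 3))))))
      (((hom3 z hz).comp (MonoidHom.fst _ _)) * ((hom3 w hw).comp (MonoidHom.snd _ _))))
    refine ⟨n, ?_⟩
    rw [Fintype.sum_prod_type] at hn
    simp only [zmod3_sum, trace_twist, MonoidHom.mul_apply, MonoidHom.comp_apply,
      MonoidHom.coe_fst, MonoidHom.coe_snd, MonoidHom.coe_prodMap, MonoidHom.id_apply,
      Prod.map_apply, hom3_apply, toAdd_one, toAdd_ofAdd, ZMod.val_zero,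
      ZMod.val_one, pow_zero, pow_one, map_one, mul_one, one_mul, inv_one, Units.val_one,
      Units.val_mul, mul_inv_rev, Units.val_inv_eq_inv_val, Units.val_pow_eq_pow_val,
      show ((2 : ZMod 3)).val = 2 from rfl,
      show Fintype.card (Multiplicative (ZMod 3) × Multiplicative (ZMod 3)) = 9 from rfl] at hn
    push_cast at hn ⊢
    linear_combination hn
  -- instantiate the six characters of C3 × C3
  obtain ⟨a, eqa⟩ := key9 1 1 (one_pow 3) (one_pow 3)
  obtain ⟨b, eqb⟩ := key9 zu 1 hzu3 (one_pow 3)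
  obtain ⟨c, eqc⟩ := key9 1 zu (one_pow 3) hzu3
  obtain ⟨d, eqd⟩ := key9 zu zu hzu3 hzu3
  obtain ⟨e, eqe⟩ := key9 1 (zu ^ 2) (one_pow 3) hzu23
  obtain ⟨f, eqf⟩ := key9 zu (zu ^ 2) hzu3 hzu23
  simp only [Units.val_one, Units.val_pow_eq_pow_val, hzuval, one_pow, inv_one, one_mul,
    mul_one, hi1, hi2, hi4, h11, hd1, hd2, hr1, hr2, hcσ] at eqa eqb eqc eqd eqe eqf
  -- clean forms
  have eqa' : 1 + 2 * LinearMap.trace ℂ V (ρ (finRotate 3, Multiplicative.ofAdd 1)) +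
      2 * LinearMap.trace ℂ V (ρ (finRotate 3, Multiplicative.ofAdd 2)) = 9 * (a : ℂ) := by
    linear_combination eqa
  have eqb' : 4 - LinearMap.trace ℂ V (ρ (finRotate 3, Multiplicative.ofAdd 1)) -
      LinearMap.trace ℂ V (ρ (finRotate 3, Multiplicative.ofAdd 2)) = 9 * (b : ℂ) := by
    linear_combination eqb + (1 - LinearMap.trace ℂ V (ρ (finRotate 3, Multiplicative.ofAdd 1))
      - LinearMap.trace ℂ V (ρ (finRotate 3, Multiplicative.ofAdd 2))) * hζq
  have eqc' : 4 + 2 * ζ ^ 2 * LinearMap.trace ℂ V (ρ (finRotate 3, Multiplicative.ofAdd 1)) +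
      2 * ζ * LinearMap.trace ℂ V (ρ (finRotate 3, Multiplicative.ofAdd 2)) = 9 * (c : ℂ) := by
    linear_combination eqc + hζq
  have eqd' : 7 - ζ ^ 2 * LinearMap.trace ℂ V (ρ (finRotate 3, Multiplicative.ofAdd 1)) -
      ζ * LinearMap.trace ℂ V (ρ (finRotate 3, Multiplicative.ofAdd 2)) = 9 * (d : ℂ) := by
    linear_combination eqd + (2 - ζ ^ 2 * LinearMap.trace ℂ V
      (ρ (finRotate 3, Multiplicative.ofAdd 1)) -
      ζ * LinearMap.trace ℂ V (ρ (finRotate 3, Multiplicative.ofAdd 2))) * hζq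
  have eqe' : 4 + 2 * ζ * LinearMap.trace ℂ V (ρ (finRotate 3, Multiplicative.ofAdd 1)) +
      2 * ζ ^ 2 * LinearMap.trace ℂ V (ρ (finRotate 3, Multiplicative.ofAdd 2)) = 9 * (e : ℂ) := by
    linear_combination eqe + hζq
  have eqf' : 7 - ζ * LinearMap.trace ℂ V (ρ (finRotate 3, Multiplicative.ofAdd 1)) -
      ζ ^ 2 * LinearMap.trace ℂ V (ρ (finRotate 3, Multiplicative.ofAdd 2)) = 9 * (f : ℂ) := by
    linear_combination eqf + (2 - ζ * LinearMap.trace ℂ V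
      (ρ (finRotate 3, Multiplicative.ofAdd 1)) -
      ζ ^ 2 * LinearMap.trace ℂ V (ρ (finRotate 3, Multiplicative.ofAdd 2))) * hζq
  -- integrality forces the values
  have hab : a + 2 * b = 1 := by
    have : (a : ℂ) + 2 * (b : ℂ) = 1 := by
      linear_combination (-1/9 : ℂ) * eqa' + (-2/9 : ℂ) * eqb'
    exact_mod_cast this
  have hb0 : b = 0 := by omega
  have hS : LinearMap.trace ℂ V (ρ (finRotate 3, Multiplicative.ofAdd 1)) +
      LinearMap.trace ℂ V (ρ (finRotate 3, Multiplicative.ofAdd 2)) = 4 := by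
    rw [hb0] at eqb'
    push_cast at eqb'
    linear_combination -eqb'
  have hcd : c + 2 * d = 2 := by
    have : (c : ℂ) + 2 * (d : ℂ) = 2 := by
      linear_combination (-1/9 : ℂ) * eqc' + (-2/9 : ℂ) * eqd'
    exact_mod_cast this
  have hef : e + 2 * f = 2 := by
    have : (e : ℂ) + 2 * (f : ℂ) = 2 := by
      linear_combination (-1/9 : ℂ) * eqe' + (-2/9 : ℂ) * eqf'
    exact_mod_cast this
  have hXY : (ζ ^ 2 * LinearMap.trace ℂ V (ρ (finRotate 3, Multiplicative.ofAdd 1)) +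
        ζ * LinearMap.trace ℂ V (ρ (finRotate 3, Multiplicative.ofAdd 2))) +
      (ζ * LinearMap.trace ℂ V (ρ (finRotate 3, Multiplicative.ofAdd 1)) +
        ζ ^ 2 * LinearMap.trace ℂ V (ρ (finRotate 3, Multiplicative.ofAdd 2))) = -4 := by
    linear_combination (LinearMap.trace ℂ V (ρ (finRotate 3, Multiplicative.ofAdd 1)) +
      LinearMap.trace ℂ V (ρ (finRotate 3, Multiplicative.ofAdd 2))) * hζq - hS
  have hX : ζ ^ 2 * LinearMap.trace ℂ V (ρ (finRotate 3, Multiplicative.ofAdd 1)) +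
      ζ * LinearMap.trace ℂ V (ρ (finRotate 3, Multiplicative.ofAdd 2)) = -2 := by
    rcases (by omega : c = 0 ∧ d = 1 ∨ c = 2 ∧ d = 0) with ⟨hc, hd⟩ | ⟨hc, hd⟩
    · rw [hc] at eqc'
      push_cast at eqc'
      linear_combination eqc' / 2
    · -- X = 7, contradiction with Y ∈ {-2, 7}
      rw [hd] at eqd'
      push_cast at eqd'
      have hX7 : ζ ^ 2 * LinearMap.trace ℂ V (ρ (finRotate 3, Multiplicative.ofAdd 1)) +
          ζ * LinearMap.trace ℂ V (ρ (finRotate 3, Multiplicative.ofAdd 2)) = 7 := by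
        linear_combination -eqd'
      exfalso
      rcases (by omega : e = 0 ∧ f = 1 ∨ e = 2 ∧ f = 0) with ⟨he, hf⟩ | ⟨he, hf⟩
      · rw [he] at eqe'
        push_cast at eqe'
        have hY : ζ * LinearMap.trace ℂ V (ρ (finRotate 3, Multiplicative.ofAdd 1)) +
            ζ ^ 2 * LinearMap.trace ℂ V (ρ (finRotate 3, Multiplicative.ofAdd 2)) = -2 := by
          linear_combination eqe' / 2
        have : (9 : ℂ) = 0 := by linear_combination hXY - hX7 - hY
        norm_num at this
      · rw [hf] at eqf'
        push_cast at eqf'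
        have hY : ζ * LinearMap.trace ℂ V (ρ (finRotate 3, Multiplicative.ofAdd 1)) +
            ζ ^ 2 * LinearMap.trace ℂ V (ρ (finRotate 3, Multiplicative.ofAdd 2)) = 7 := by
          linear_combination -eqf'
        have : (18 : ℂ) = 0 := by linear_combination hXY - hX7 - hY
        norm_num at this
  have hY : ζ * LinearMap.trace ℂ V (ρ (finRotate 3, Multiplicative.ofAdd 1)) +
      ζ ^ 2 * LinearMap.trace ℂ V (ρ (finRotate 3, Multiplicative.ofAdd 2)) = -2 := by
    linear_combination hXY - hX
  have hW12 : LinearMap.trace ℂ V (ρ (finRotate 3, Multiplicative.ofAdd 1)) =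
      LinearMap.trace ℂ V (ρ (finRotate 3, Multiplicative.ofAdd 2)) := by
    have h0 : ζ * (ζ - 1) * (LinearMap.trace ℂ V (ρ (finRotate 3, Multiplicative.ofAdd 1)) -
        LinearMap.trace ℂ V (ρ (finRotate 3, Multiplicative.ofAdd 2))) = 0 := by
      linear_combination hX - hY
    rcases mul_eq_zero.mp h0 with h1 | h1
    · rcases mul_eq_zero.mp h1 with h2 | h2
      · exact absurd h2 hζ0
      · exact absurd (sub_eq_zero.mp h2) hζ1
    · exact sub_eq_zero.mp h1
  have hWa : LinearMap.trace ℂ V (ρ (finRotate 3, Multiplicative.ofAdd 1)) = 2 := by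
    linear_combination (1/2 : ℂ) * hS + (1/2 : ℂ) * hW12
  have hWb : LinearMap.trace ℂ V (ρ (finRotate 3, Multiplicative.ofAdd 2)) = 2 := by
    linear_combination (1/2 : ℂ) * hS - (1/2 : ℂ) * hW12
  -- the full group constraint
  have key18 : ∀ lam : (Equiv.Perm (Fin 3) × Multiplicative (ZMod 3)) →* ℂˣ, ∃ n : ℕ,
      (((lam ((1, 1) : Equiv.Perm (Fin 3) × Multiplicative (ZMod 3)))⁻¹ : ℂˣ) : ℂ) * LinearMap.trace ℂ V (ρ (1, 1)) +
        (((lam ((1, Multiplicative.ofAdd 1) : Equiv.Perm (Fin 3) × Multiplicative (ZMod 3)))⁻¹ : ℂˣ) : ℂ) * LinearMap.trace ℂ V (ρ (1, Multiplicative.ofAdd 1)) +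
        (((lam ((1, Multiplicative.ofAdd 2) : Equiv.Perm (Fin 3) × Multiplicative (ZMod 3)))⁻¹ : ℂˣ) : ℂ) * LinearMap.trace ℂ V (ρ (1, Multiplicative.ofAdd 2)) +
        (((lam ((Equiv.swap 0 1, 1) : Equiv.Perm (Fin 3) × Multiplicative (ZMod 3)))⁻¹ : ℂˣ) : ℂ) * LinearMap.trace ℂ V (ρ (Equiv.swap 0 1, 1)) +
        (((lam ((Equiv.swap 0 1, Multiplicative.ofAdd 1) : Equiv.Perm (Fin 3) × Multiplicative (ZMod 3)))⁻¹ : ℂˣ) : ℂ) * LinearMap.trace ℂ V (ρ (Equiv.swap 0 1, Multiplicative.ofAdd 1)) +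
        (((lam ((Equiv.swap 0 1, Multiplicative.ofAdd 2) : Equiv.Perm (Fin 3) × Multiplicative (ZMod 3)))⁻¹ : ℂˣ) : ℂ) * LinearMap.trace ℂ V (ρ (Equiv.swap 0 1, Multiplicative.ofAdd 2)) +
        (((lam ((Equiv.swap 0 2, 1) : Equiv.Perm (Fin 3) × Multiplicative (ZMod 3)))⁻¹ : ℂˣ) : ℂ) * LinearMap.trace ℂ V (ρ (Equiv.swap 0 2, 1)) +
        (((lam ((Equiv.swap 0 2, Multiplicative.ofAdd 1) : Equiv.Perm (Fin 3) × Multiplicative (ZMod 3)))⁻¹ : ℂˣ) : ℂ) * LinearMap.trace ℂ V (ρ (Equiv.swap 0 2, Multiplicative.ofAdd 1)) +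
        (((lam ((Equiv.swap 0 2, Multiplicative.ofAdd 2) : Equiv.Perm (Fin 3) × Multiplicative (ZMod 3)))⁻¹ : ℂˣ) : ℂ) * LinearMap.trace ℂ V (ρ (Equiv.swap 0 2, Multiplicative.ofAdd 2)) +
        (((lam ((Equiv.swap 1 2, 1) : Equiv.Perm (Fin 3) × Multiplicative (ZMod 3)))⁻¹ : ℂˣ) : ℂ) * LinearMap.trace ℂ V (ρ (Equiv.swap 1 2, 1)) +
        (((lam ((Equiv.swap 1 2, Multiplicative.ofAdd 1) : Equiv.Perm (Fin 3) × Multiplicative (ZMod 3)))⁻¹ : ℂˣ) : ℂ) * LinearMap.trace ℂ V (ρ (Equiv.swap 1 2, Multiplicative.ofAdd 1)) +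
        (((lam ((Equiv.swap 1 2, Multiplicative.ofAdd 2) : Equiv.Perm (Fin 3) × Multiplicative (ZMod 3)))⁻¹ : ℂˣ) : ℂ) * LinearMap.trace ℂ V (ρ (Equiv.swap 1 2, Multiplicative.ofAdd 2)) +
        (((lam ((finRotate 3, 1) : Equiv.Perm (Fin 3) × Multiplicative (ZMod 3)))⁻¹ : ℂˣ) : ℂ) * LinearMap.trace ℂ V (ρ (finRotate 3, 1)) +
        (((lam ((finRotate 3, Multiplicative.ofAdd 1) : Equiv.Perm (Fin 3) × Multiplicative (ZMod 3)))⁻¹ : ℂˣ) : ℂ) * LinearMap.trace ℂ V (ρ (finRotate 3, Multiplicative.ofAdd 1)) +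
        (((lam ((finRotate 3, Multiplicative.ofAdd 2) : Equiv.Perm (Fin 3) × Multiplicative (ZMod 3)))⁻¹ : ℂˣ) : ℂ) * LinearMap.trace ℂ V (ρ (finRotate 3, Multiplicative.ofAdd 2)) +
        (((lam (((finRotate 3) ^ 2, 1) : Equiv.Perm (Fin 3) × Multiplicative (ZMod 3)))⁻¹ : ℂˣ) : ℂ) * LinearMap.trace ℂ V (ρ ((finRotate 3) ^ 2, 1)) +
        (((lam (((finRotate 3) ^ 2, Multiplicative.ofAdd 1) : Equiv.Perm (Fin 3) × Multiplicative (ZMod 3)))⁻¹ : ℂˣ) : ℂ) * LinearMap.trace ℂ V (ρ ((finRotate 3) ^ 2, Multiplicative.ofAdd 1)) +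
        (((lam (((finRotate 3) ^ 2, Multiplicative.ofAdd 2) : Equiv.Perm (Fin 3) × Multiplicative (ZMod 3)))⁻¹ : ℂˣ) : ℂ) * LinearMap.trace ℂ V (ρ ((finRotate 3) ^ 2, Multiplicative.ofAdd 2)) = 18 * n := by
    intro lam
    obtain ⟨n, hn⟩ := sum_trace_eq (twist ρ lam)
    refine ⟨n, ?_⟩
    rw [Fintype.sum_prod_type] at hn
    simp only [perm3_sum, zmod3_sum, trace_twist,
      show Fintype.card (Equiv.Perm (Fin 3) × Multiplicative (ZMod 3)) = 18 from by
        simp [Fintype.card_perm]; rfl] at hn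
    push_cast at hn ⊢
    linear_combination hn
  -- sign character values
  have hsg01 : sgnC (Equiv.swap 0 1) = -1 := by
    rw [sgnC, MonoidHom.comp_apply,
      show Equiv.Perm.sign (Equiv.swap (0 : Fin 3) 1) = -1 from by decide]
    ext; simp
  have hsg02 : sgnC (Equiv.swap 0 2) = -1 := by
    rw [sgnC, MonoidHom.comp_apply,
      show Equiv.Perm.sign (Equiv.swap (0 : Fin 3) 2) = -1 from by decide]
    ext; simp
  have hsg12 : sgnC (Equiv.swap 1 2) = -1 := by
    rw [sgnC, MonoidHom.comp_apply,
      show Equiv.Perm.sign (Equiv.swap (1 : Fin 3) 2) = -1 from by decide]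
    ext; simp
  have hsgρ : sgnC (finRotate 3) = 1 := by
    rw [sgnC, MonoidHom.comp_apply, show Equiv.Perm.sign (finRotate 3) = 1 from by decide]
    ext; simp
  have hsgρ2 : sgnC ((finRotate 3) ^ 2) = 1 := by
    rw [sgnC, MonoidHom.comp_apply, show Equiv.Perm.sign ((finRotate 3) ^ 2) = 1 from by decide]
    ext; simp
  have hm1 : ((-1 : ℂˣ))⁻¹ = -1 := by rw [inv_eq_iff_mul_eq_one]; ext; norm_num
  -- instantiate the four group-level characters
  obtain ⟨g1, eqg1⟩ := key18 ((hom3 zu hzu3).comp (MonoidHom.snd _ _))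
  obtain ⟨g2, eqg2⟩ := key18 ((sgnC.comp (MonoidHom.fst _ _)) *
    ((hom3 zu hzu3).comp (MonoidHom.snd _ _)))
  obtain ⟨g3, eqg3⟩ := key18 ((hom3 (zu ^ 2) hzu23).comp (MonoidHom.snd _ _))
  obtain ⟨g4, eqg4⟩ := key18 ((sgnC.comp (MonoidHom.fst _ _)) *
    ((hom3 (zu ^ 2) hzu23).comp (MonoidHom.snd _ _)))
  simp only [MonoidHom.mul_apply, MonoidHom.comp_apply, MonoidHom.coe_fst, MonoidHom.coe_snd,
    hom3_apply, toAdd_one, toAdd_ofAdd, ZMod.val_zero, ZMod.val_one,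
    show ((2 : ZMod 3)).val = 2 from rfl, pow_zero, pow_one, map_one, mul_inv, mul_one, one_mul,
    hsg01, hsg02, hsg12, hsgρ, hsgρ2, hm1, inv_one, Units.val_one, Units.val_neg, Units.val_mul,
    Units.val_inv_eq_inv_val, Units.val_pow_eq_pow_val, hzuval, hi1, hi2, hi4,
    h11, hd1, hd2, hr1, hr2, ht01, ht02, ht12, hcσ, hcτ2, hcτ3, hWa, hWb]
    at eqg1 eqg2 eqg3 eqg4
  have eqg1' : -3 + 3 * (ζ ^ 2 * LinearMap.trace ℂ V (ρ (Equiv.swap 0 1, Multiplicative.ofAdd 1))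
      + ζ * LinearMap.trace ℂ V (ρ (Equiv.swap 0 1, Multiplicative.ofAdd 2))) = 18 * (g1 : ℂ) := by
    linear_combination eqg1 - 3 * hζq
  have eqg2' : 3 - 3 * (ζ ^ 2 * LinearMap.trace ℂ V (ρ (Equiv.swap 0 1, Multiplicative.ofAdd 1))
      + ζ * LinearMap.trace ℂ V (ρ (Equiv.swap 0 1, Multiplicative.ofAdd 2))) = 18 * (g2 : ℂ) := by
    linear_combination eqg2 - 3 * hζq
  have eqg3' : -3 + 3 * (ζ * LinearMap.trace ℂ V (ρ (Equiv.swap 0 1, Multiplicative.ofAdd 1))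
      + ζ ^ 2 * LinearMap.trace ℂ V (ρ (Equiv.swap 0 1, Multiplicative.ofAdd 2))) = 18 * (g3 : ℂ) := by
    linear_combination eqg3 - 3 * hζq
  have eqg4' : 3 - 3 * (ζ * LinearMap.trace ℂ V (ρ (Equiv.swap 0 1, Multiplicative.ofAdd 1))
      + ζ ^ 2 * LinearMap.trace ℂ V (ρ (Equiv.swap 0 1, Multiplicative.ofAdd 2))) = 18 * (g4 : ℂ) := by
    linear_combination eqg4 - 3 * hζq
  have hg12 : g1 + g2 = 0 := by
    have : (g1 : ℂ) + (g2 : ℂ) = 0 := by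
      linear_combination (-1/18 : ℂ) * eqg1' + (-1/18 : ℂ) * eqg2'
    exact_mod_cast this
  have hg34 : g3 + g4 = 0 := by
    have : (g3 : ℂ) + (g4 : ℂ) = 0 := by
      linear_combination (-1/18 : ℂ) * eqg3' + (-1/18 : ℂ) * eqg4'
    exact_mod_cast this
  have hg1 : g1 = 0 := by omega
  have hg3 : g3 = 0 := by omega
  rw [hg1] at eqg1'
  rw [hg3] at eqg3'
  push_cast at eqg1' eqg3'
  have hTζ : ζ ^ 2 * LinearMap.trace ℂ V (ρ (Equiv.swap 0 1, Multiplicative.ofAdd 1))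
      + ζ * LinearMap.trace ℂ V (ρ (Equiv.swap 0 1, Multiplicative.ofAdd 2)) = 1 := by
    linear_combination eqg1' / 3
  have hTζ2 : ζ * LinearMap.trace ℂ V (ρ (Equiv.swap 0 1, Multiplicative.ofAdd 1))
      + ζ ^ 2 * LinearMap.trace ℂ V (ρ (Equiv.swap 0 1, Multiplicative.ofAdd 2)) = 1 := by
    linear_combination eqg3' / 3
  have hU12 : LinearMap.trace ℂ V (ρ (Equiv.swap 0 1, Multiplicative.ofAdd 1)) =
      LinearMap.trace ℂ V (ρ (Equiv.swap 0 1, Multiplicative.ofAdd 2)) := by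
    have h0 : ζ * (ζ - 1) * (LinearMap.trace ℂ V (ρ (Equiv.swap 0 1, Multiplicative.ofAdd 1)) -
        LinearMap.trace ℂ V (ρ (Equiv.swap 0 1, Multiplicative.ofAdd 2))) = 0 := by
      linear_combination hTζ - hTζ2
    rcases mul_eq_zero.mp h0 with h1 | h1
    · rcases mul_eq_zero.mp h1 with h2 | h2
      · exact absurd h2 hζ0
      · exact absurd (sub_eq_zero.mp h2) hζ1
    · exact sub_eq_zero.mp h1
  have hUa : LinearMap.trace ℂ V (ρ (Equiv.swap 0 1, Multiplicative.ofAdd 1)) = -1 := by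
    linear_combination -hTζ + LinearMap.trace ℂ V
      (ρ (Equiv.swap 0 1, Multiplicative.ofAdd 1)) * hζq - ζ * hU12
  have hUb : LinearMap.trace ℂ V (ρ (Equiv.swap 0 1, Multiplicative.ofAdd 2)) = -1 := by
    linear_combination hUa - hU12
  -- final case analysis
  intro g h
  rcases perm3_cases g with rfl | rfl | rfl | rfl | rfl | rfl <;>
    rcases zmod3_cases h with rfl | rfl | rfl
  · rw [h11]
    norm_num [show ((Finset.univ.filter fun i => (1 : Equiv.Perm (Fin 3)) i = i).card) = 3
      from by decide, show ZMod.val (1 : ZMod 3) = 1 from rfl, show ZMod.val (2 : ZMod 3) = 2 from rfl]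
  · rw [hd1]
    norm_num [show ((Finset.univ.filter fun i => (1 : Equiv.Perm (Fin 3)) i = i).card) = 3
      from by decide, show ZMod.val (1 : ZMod 3) = 1 from rfl, show ZMod.val (2 : ZMod 3) = 2 from rfl]
    linear_combination -2 * hζq
  · rw [hd2]
    norm_num [show ((Finset.univ.filter fun i => (1 : Equiv.Perm (Fin 3)) i = i).card) = 3
      from by decide, show ZMod.val (1 : ZMod 3) = 1 from rfl, show ZMod.val (2 : ZMod 3) = 2 from rfl]
    linear_combination -2 * hζq - 2 * ζ * hζ3
  · rw [ht01]
    norm_num [show ((Finset.univ.filter fun i => (Equiv.swap (0 : Fin 3) 1) i = i).card) = 1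
      from by decide, show Equiv.Perm.sign (Equiv.swap (0 : Fin 3) 1) = -1 from by decide, show ZMod.val (1 : ZMod 3) = 1 from rfl, show ZMod.val (2 : ZMod 3) = 2 from rfl]
  · rw [hUa]
    norm_num [show ((Finset.univ.filter fun i => (Equiv.swap (0 : Fin 3) 1) i = i).card) = 1
      from by decide, show Equiv.Perm.sign (Equiv.swap (0 : Fin 3) 1) = -1 from by decide, show ZMod.val (1 : ZMod 3) = 1 from rfl, show ZMod.val (2 : ZMod 3) = 2 from rfl]
  · rw [hUb]
    norm_num [show ((Finset.univ.filter fun i => (Equiv.swap (0 : Fin 3) 1) i = i).card) = 1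
      from by decide, show Equiv.Perm.sign (Equiv.swap (0 : Fin 3) 1) = -1 from by decide, show ZMod.val (1 : ZMod 3) = 1 from rfl, show ZMod.val (2 : ZMod 3) = 2 from rfl]
  · rw [ht02]
    norm_num [show ((Finset.univ.filter fun i => (Equiv.swap (0 : Fin 3) 2) i = i).card) = 1
      from by decide, show Equiv.Perm.sign (Equiv.swap (0 : Fin 3) 2) = -1 from by decide, show ZMod.val (1 : ZMod 3) = 1 from rfl, show ZMod.val (2 : ZMod 3) = 2 from rfl]
  · rw [hcτ2, hUa]
    norm_num [show ((Finset.univ.filter fun i => (Equiv.swap (0 : Fin 3) 2) i = i).card) = 1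
      from by decide, show Equiv.Perm.sign (Equiv.swap (0 : Fin 3) 2) = -1 from by decide, show ZMod.val (1 : ZMod 3) = 1 from rfl, show ZMod.val (2 : ZMod 3) = 2 from rfl]
  · rw [hcτ2, hUb]
    norm_num [show ((Finset.univ.filter fun i => (Equiv.swap (0 : Fin 3) 2) i = i).card) = 1
      from by decide, show Equiv.Perm.sign (Equiv.swap (0 : Fin 3) 2) = -1 from by decide, show ZMod.val (1 : ZMod 3) = 1 from rfl, show ZMod.val (2 : ZMod 3) = 2 from rfl]
  · rw [ht12]
    norm_num [show ((Finset.univ.filter fun i => (Equiv.swap (1 : Fin 3) 2) i = i).card) = 1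
      from by decide, show Equiv.Perm.sign (Equiv.swap (1 : Fin 3) 2) = -1 from by decide, show ZMod.val (1 : ZMod 3) = 1 from rfl, show ZMod.val (2 : ZMod 3) = 2 from rfl]
  · rw [hcτ3, hUa]
    norm_num [show ((Finset.univ.filter fun i => (Equiv.swap (1 : Fin 3) 2) i = i).card) = 1
      from by decide, show Equiv.Perm.sign (Equiv.swap (1 : Fin 3) 2) = -1 from by decide, show ZMod.val (1 : ZMod 3) = 1 from rfl, show ZMod.val (2 : ZMod 3) = 2 from rfl]
  · rw [hcτ3, hUb]
    norm_num [show ((Finset.univ.filter fun i => (Equiv.swap (1 : Fin 3) 2) i = i).card) = 1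
      from by decide, show Equiv.Perm.sign (Equiv.swap (1 : Fin 3) 2) = -1 from by decide, show ZMod.val (1 : ZMod 3) = 1 from rfl, show ZMod.val (2 : ZMod 3) = 2 from rfl]
  · rw [hr1]
    norm_num [show ((Finset.univ.filter fun i => (finRotate 3) i = i).card) = 0
      from by decide, show Equiv.Perm.sign (finRotate 3) = 1 from by decide, show ZMod.val (1 : ZMod 3) = 1 from rfl, show ZMod.val (2 : ZMod 3) = 2 from rfl]
  · rw [hWa]
    norm_num [show ((Finset.univ.filter fun i => (finRotate 3) i = i).card) = 0
      from by decide, show Equiv.Perm.sign (finRotate 3) = 1 from by decide, show ZMod.val (1 : ZMod 3) = 1 from rfl, show ZMod.val (2 : ZMod 3) = 2 from rfl]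
    linear_combination hζq
  · rw [hWb]
    norm_num [show ((Finset.univ.filter fun i => (finRotate 3) i = i).card) = 0
      from by decide, show Equiv.Perm.sign (finRotate 3) = 1 from by decide, show ZMod.val (1 : ZMod 3) = 1 from rfl, show ZMod.val (2 : ZMod 3) = 2 from rfl]
    linear_combination hζq + ζ * hζ3
  · rw [hr2]
    norm_num [show ((Finset.univ.filter fun i => ((finRotate 3) ^ 2) i = i).card) = 0
      from by decide, show Equiv.Perm.sign ((finRotate 3) ^ 2) = 1 from by decide, show ZMod.val (1 : ZMod 3) = 1 from rfl, show ZMod.val (2 : ZMod 3) = 2 from rfl]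
  · rw [hcσ, hWa]
    norm_num [show ((Finset.univ.filter fun i => ((finRotate 3) ^ 2) i = i).card) = 0
      from by decide, show Equiv.Perm.sign ((finRotate 3) ^ 2) = 1 from by decide, show ZMod.val (1 : ZMod 3) = 1 from rfl, show ZMod.val (2 : ZMod 3) = 2 from rfl]
    linear_combination hζq
  · rw [hcσ, hWb]
    norm_num [show ((Finset.univ.filter fun i => ((finRotate 3) ^ 2) i = i).card) = 0
      from by decide, show Equiv.Perm.sign ((finRotate 3) ^ 2) = 1 from by decide, show ZMod.val (1 : ZMod 3) = 1 from rfl, show ZMod.val (2 : ZMod 3) = 2 from rfl]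
    linear_combination hζq + ζ * hζ3
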